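/- Characterization of extendible finite sets in locally 2-colorable graphs: Let G be a locally 2-colorable graph on vertex set ℕ and let F ⊆ ℕ be finite. Then F is 2-homogeneous for G (i.e. every finite V₀ ⊆ ℕ induces a subgraph of G admitting a proper 2-coloring that assigns color 0 to every vertex of V₀ ∩ F) if and only if no two vertices x, y ∈ F are the endpoints of a walk of odd length in G. -/

import Mathlib

/-- `G` is locally 2-colorable: every finite set of vertices induces a subgraph
admitting a proper 2-coloring. -/
def LocallyTwoColorable (G : SimpleGraph ℕ) : Prop :=
  ∀ V₀ : Finset ℕ, ∃ c : ℕ → Fin 2,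
    ∀ x ∈ V₀, ∀ y ∈ V₀, G.Adj x y → c x ≠ c y

/-- `H` is 2-homogeneous for `G`: every finite set `V₀` of vertices induces a subgraph
admitting a proper 2-coloring that colors every vertex of `V₀ ∩ H` with color `0`. -/
def TwoHomogeneous (G : SimpleGraph ℕ) (H : Set ℕ) : Prop :=
  ∀ V₀ : Finset ℕ, ∃ c : ℕ → Fin 2,
    (∀ x ∈ V₀, ∀ y ∈ V₀, G.Adj x y → c x ≠ c y) ∧
    ∀ x ∈ V₀, x ∈ H → c x = 0


/-- Restriction of a graph to a finite vertex set. -/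
def restrictG (G : SimpleGraph ℕ) (V : Finset ℕ) : SimpleGraph ℕ where
  Adj x y := G.Adj x y ∧ x ∈ V ∧ y ∈ V
  symm := ⟨fun _ _ ⟨h, hx, hy⟩ => ⟨h.symm, hy, hx⟩⟩
  loopless := ⟨fun x ⟨h, _, _⟩ => G.loopless.irrefl x h⟩

lemma restrictG_le (G : SimpleGraph ℕ) (V : Finset ℕ) : restrictG G V ≤ G :=
  fun _ _ h => h.1

lemma parity_lemma {G : SimpleGraph ℕ} (c : ℕ → Fin 2)
    (hc : ∀ x y, G.Adj x y → c x ≠ c y) :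
    ∀ {a b : ℕ} (w : G.Walk a b), c a = c b ↔ Even w.length := by
  intro a b w
  induction w with
  | nil => simp
  | cons h p ih =>
    have key : ∀ x y z : Fin 2, x ≠ y → (x = z ↔ ¬ y = z) := by decide
    rw [SimpleGraph.Walk.length_cons, Nat.even_add_one, key _ _ _ (hc _ _ h), ih]

/-- **Characterization of extendible finite sets in locally 2-colorable graphs.**
A finite `F ⊆ ℕ` is 2-homogeneous for a locally 2-colorable graph `G` iff no two
vertices of `F` are the endpoints of a walk of odd length in `G`. -/
theorem two_homogeneous_iff_no_odd_walk (G : SimpleGraph ℕ)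
    (hG : LocallyTwoColorable G) (F : Finset ℕ) :
    TwoHomogeneous G ↑F ↔
      ∀ x ∈ F, ∀ y ∈ F, ¬ ∃ w : G.Walk x y, Odd w.length := by
  constructor
  · -- forward
    rintro h x hx y hy ⟨w, hw⟩
    set V₀ := w.support.toFinset with hV₀
    obtain ⟨c, hc, hc0⟩ := h V₀
    -- transfer w to restrictG G V₀
    have hedges : ∀ e ∈ w.edges, e ∈ (restrictG G V₀).edgeSet := by
      intro e he
      induction e using Sym2.ind with
      | _ u v =>
        refine ⟨w.adj_of_mem_edges he, ?_, ?_⟩ <;> rw [hV₀, List.mem_toFinset]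
        · exact w.fst_mem_support_of_mem_edges he
        · exact w.snd_mem_support_of_mem_edges he
    have hc' : ∀ u v, (restrictG G V₀).Adj u v → c u ≠ c v :=
      fun u v ⟨ha, hu, hv⟩ => hc u hu v hv ha
    have hx' : x ∈ V₀ := by rw [hV₀, List.mem_toFinset]; exact w.start_mem_support
    have hy' : y ∈ V₀ := by rw [hV₀, List.mem_toFinset]; exact w.end_mem_support
    have heq : c x = c y := by
      rw [hc0 x hx' (by exact_mod_cast hx), hc0 y hy' (by exact_mod_cast hy)]
    have := (parity_lemma c hc' (w.transfer _ hedges)).mp heq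
    rw [SimpleGraph.Walk.length_transfer] at this
    exact (Nat.not_even_iff_odd.mpr hw) this
  · -- backward
    intro hno V₀
    obtain ⟨c, hc⟩ := hG V₀
    set G₀ := restrictG G V₀ with hG₀
    have hc' : ∀ u v, G₀.Adj u v → c u ≠ c v :=
      fun u v ⟨ha, hu, hv⟩ => hc u hu v hv ha
    -- colors of F-vertices reachable in G₀ agree
    have hFF : ∀ f f', f ∈ F → f' ∈ F → G₀.Reachable f f' → c f = c f' := by
      rintro f f' hf hf' ⟨w⟩
      have hnotodd := hno f hf f' hf'
      have heven : Even (w.mapLe (restrictG_le G V₀)).length := by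
        by_contra hodd
        exact hnotodd ⟨_, Nat.not_even_iff_odd.mp hodd⟩
      rw [(parity_lemma c hc' w)]
      simpa [SimpleGraph.Walk.mapLe] using heven
    classical
    refine ⟨fun x => c x + (if h : ∃ f, f ∈ F ∧ G₀.Reachable x f then c h.choose else 0),
      ?_, ?_⟩
    · intro x hxV y hyV hxy
      have hadj : G₀.Adj x y := ⟨hxy, hxV, hyV⟩
      have hsame : (if h : ∃ f, f ∈ F ∧ G₀.Reachable x f then c h.choose else 0)
          = (if h : ∃ f, f ∈ F ∧ G₀.Reachable y f then c h.choose else 0) := by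
        by_cases h1 : ∃ f, f ∈ F ∧ G₀.Reachable x f
        · have h2 : ∃ f, f ∈ F ∧ G₀.Reachable y f :=
            ⟨h1.choose, h1.choose_spec.1, (hadj.symm.toWalk.reachable).trans h1.choose_spec.2⟩
          rw [dif_pos h1, dif_pos h2]
          exact hFF _ _ h1.choose_spec.1 h2.choose_spec.1
            (h1.choose_spec.2.symm.trans ((hadj.toWalk.reachable).trans h2.choose_spec.2))
        · have h2 : ¬ ∃ f, f ∈ F ∧ G₀.Reachable y f := by
            rintro ⟨f, hf, hr⟩
            exact h1 ⟨f, hf, (hadj.toWalk.reachable).trans hr⟩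
          rw [dif_neg h1, dif_neg h2]
      dsimp only
      rw [hsame]
      exact fun h => hc x hxV y hyV hxy (add_right_cancel h)
    · intro x hxV hxF
      have hxF' : x ∈ F := by exact_mod_cast hxF
      have h1 : ∃ f, f ∈ F ∧ G₀.Reachable x f := ⟨x, hxF', SimpleGraph.Reachable.refl x⟩
      dsimp only
      rw [dif_pos h1, ← hFF _ _ hxF' h1.choose_spec.1 h1.choose_spec.2]
      have : ∀ a : Fin 2, a + a = 0 := by decide
      exact this _
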